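/- arXiv:2604.02750 — 3 statements merged into one kernel-verified Lean document; each statement's English description precedes it below -/
import Mathlib

section
/- Let X be a metric space, m a Borel probability measure on X, f: X → X measurable, and ν a σ-finite infinite Borel measure on X that is f-invariant, ergodic, conservative, and absolutely continuous with respect to m. Suppose there exists p ∈ X such that ν(X \ O) < ∞ for every open neighborhood O of p. Then the set of points x ∈ X such that (1/n)∑_{i=0}^{n-1} φ(f^i(x)) → φ(p) for every bounded continuous φ: X → ℝ has positive m-measure. -/
open MeasureTheory Filter

section HopfAuxiliary

open Finset
open scoped ENNReal NNReal


section aux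
lemma mylimsup_add_le (u v : ℕ → ℝ≥0∞) :
    limsup (fun n => u n + v n) atTop ≤ limsup u atTop + limsup v atTop := by
  by_cases hu : limsup u atTop = ⊤
  · simp [hu]
  by_cases hv : limsup v atTop = ⊤
  · simp [hv]
  refine ENNReal.le_of_forall_pos_le_add fun ε hε _ => ?_
  have h2 : ((ε : ℝ≥0∞) / 2) ≠ 0 := by
    simp [ENNReal.div_eq_zero_iff, (ENNReal.coe_pos.2 hε).ne']
  have h1 : ∀ᶠ n in atTop, u n < limsup u atTop + ε / 2 :=
    eventually_lt_of_limsup_lt (ENNReal.lt_add_right hu h2)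
  have h1' : ∀ᶠ n in atTop, v n < limsup v atTop + ε / 2 :=
    eventually_lt_of_limsup_lt (ENNReal.lt_add_right hv h2)
  have := limsup_le_of_le (f := atTop)
    (u := fun n => u n + v n) (a := limsup u atTop + limsup v atTop + ε) ?_ ?_
  · exact this
  · exact ⟨0, fun a _ => zero_le⟩
  · filter_upwards [h1, h1'] with n hn hn'
    calc u n + v n ≤ (limsup u atTop + ε / 2) + (limsup v atTop + ε / 2) :=
          add_le_add hn.le hn'.le
      _ = limsup u atTop + limsup v atTop + ε := by
          rw [add_add_add_comm, ENNReal.add_halves]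

lemma mylimsup_le_of_forall_pos (u v : ℕ → ℝ≥0∞)
    (h : ∀ δ : ℝ, 0 < δ → ∀ᶠ n in atTop, u n ≤ v n + ENNReal.ofReal δ) :
    limsup u atTop ≤ limsup v atTop := by
  refine ENNReal.le_of_forall_pos_le_add fun ε hε _ => ?_
  have hev := h ε hε
  rw [show ENNReal.ofReal (ε:ℝ) = (ε : ℝ≥0∞) from ENNReal.ofReal_coe_nnreal] at hev
  calc limsup u atTop ≤ limsup (fun n => v n + (ε : ℝ≥0∞)) atTop :=
        limsup_le_limsup hev
    _ ≤ limsup v atTop + limsup (fun _ : ℕ => (ε : ℝ≥0∞)) atTop := mylimsup_add_le _ _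
    _ = limsup v atTop + ε := by rw [limsup_const]
end aux

set_option linter.unusedSectionVars false

variable {X : Type*} [MeasurableSpace X]

/-- Running maximum `max (0, S₁, ..., Sₙ)` of Birkhoff sums. -/
noncomputable def maxS (f : X → X) (g : X → ℝ) : ℕ → X → ℝ
  | 0 => fun _ => 0
  | (n + 1) => fun x => max (maxS f g n x) (birkhoffSum f g (n + 1) x)

lemma maxS_nonneg (f : X → X) (g : X → ℝ) (n : ℕ) (x : X) : 0 ≤ maxS f g n x := by
  induction n with
  | zero => exact le_refl 0
  | succ n ih => exact le_trans ih (le_max_left _ _)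

lemma maxS_mono (f : X → X) (g : X → ℝ) (n : ℕ) (x : X) :
    maxS f g n x ≤ maxS f g (n + 1) x := le_max_left _ _

lemma birkhoffSum_le_maxS (f : X → X) (g : X → ℝ) (n : ℕ) (x : X) :
    birkhoffSum f g n x ≤ maxS f g n x := by
  cases n with
  | zero => simp [birkhoffSum_zero, maxS]
  | succ n => exact le_max_right _ _

lemma maxS_key (f : X → X) (g : X → ℝ) (n : ℕ) (x : X) (h : 0 < maxS f g n x) :
    maxS f g n x ≤ g x + maxS f g n (f x) := by
  induction n with
  | zero => exact absurd h (by simp [maxS])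
  | succ n ih =>
    rcases le_total (maxS f g n x) (birkhoffSum f g (n + 1) x) with hc | hc
    · rw [show maxS f g (n+1) x = max (maxS f g n x) (birkhoffSum f g (n+1) x) from rfl,
        max_eq_right hc]
      calc birkhoffSum f g (n + 1) x = g x + birkhoffSum f g n (f x) :=
            birkhoffSum_succ' f g n x
        _ ≤ g x + maxS f g n (f x) := by
            gcongr; exact birkhoffSum_le_maxS f g n (f x)
        _ ≤ g x + maxS f g (n + 1) (f x) := by gcongr; exact maxS_mono f g n (f x)
    · rw [show maxS f g (n+1) x = max (maxS f g n x) (birkhoffSum f g (n+1) x) from rfl,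
        max_eq_left hc] at h ⊢
      exact (ih h).trans (by gcongr; exact maxS_mono f g n (f x))

lemma measurable_birkhoffSum {f : X → X} {g : X → ℝ} (hf : Measurable f) (hg : Measurable g)
    (n : ℕ) : Measurable (birkhoffSum f g n) := by
  apply Finset.measurable_sum
  intro i _
  exact hg.comp (hf.iterate i)

lemma integrable_comp_iterate {f : X → X} {g : X → ℝ} {ν : Measure X}
    (hmp : MeasurePreserving f ν ν) (hg : Integrable g ν) (i : ℕ) :
    Integrable (fun x => g (f^[i] x)) ν :=
  ((hmp.iterate i).integrable_comp hg.aestronglyMeasurable).2 hg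

lemma integrable_birkhoffSum {f : X → X} {g : X → ℝ} {ν : Measure X}
    (hmp : MeasurePreserving f ν ν) (hg : Integrable g ν) (n : ℕ) :
    Integrable (birkhoffSum f g n) ν := by
  have : Integrable (fun x => ∑ i ∈ Finset.range n, g (f^[i] x)) ν :=
    integrable_finset_sum _ fun i _ => integrable_comp_iterate hmp hg i
  exact this

lemma measurable_maxS {f : X → X} {g : X → ℝ} (hf : Measurable f) (hg : Measurable g) (n : ℕ) :
    Measurable (maxS f g n) := by
  induction n with
  | zero => exact measurable_const
  | succ n ih => exact ih.max (measurable_birkhoffSum hf hg (n + 1))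

lemma integrable_maxS {f : X → X} {g : X → ℝ} {ν : Measure X}
    (hmp : MeasurePreserving f ν ν) (hg : Integrable g ν) (n : ℕ) :
    Integrable (maxS f g n) ν := by
  induction n with
  | zero =>
    have : Integrable (fun _ : X => (0:ℝ)) ν := integrable_zero _ _ _
    exact this
  | succ n ih =>
    have := ih.sup (integrable_birkhoffSum hmp hg (n + 1))
    exact this

/-- Hopf's maximal ergodic lemma. -/
lemma maximal_ergodic {f : X → X} {g : X → ℝ} {ν : Measure X}
    (hf : Measurable f) (hmp : MeasurePreserving f ν ν)
    (hgm : Measurable g) (hg : Integrable g ν) (n : ℕ) :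
    0 ≤ ∫ x in {x | 0 < maxS f g n x}, g x ∂ν := by
  set E := {x | 0 < maxS f g n x} with hEdef
  have hE : MeasurableSet E := measurableSet_lt measurable_const (measurable_maxS hf hgm n)
  have hMf : Integrable (fun x => maxS f g n (f x)) ν :=
    (hmp.integrable_comp (integrable_maxS hmp hg n).aestronglyMeasurable).2
      (integrable_maxS hmp hg n)
  have hM : Integrable (maxS f g n) ν := integrable_maxS hmp hg n
  have key : ∀ x ∈ E, maxS f g n x - maxS f g n (f x) ≤ g x := fun x hx =>
    sub_le_iff_le_add.2 (maxS_key f g n x hx)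
  have h1 : ∫ x in E, (maxS f g n x - maxS f g n (f x)) ∂ν ≤ ∫ x in E, g x ∂ν :=
    setIntegral_mono_on (hM.integrableOn.sub hMf.integrableOn) hg.integrableOn hE key
  have h2 : ∫ x in E, (maxS f g n x - maxS f g n (f x)) ∂ν
      = ∫ x in E, maxS f g n x ∂ν - ∫ x in E, maxS f g n (f x) ∂ν :=
    integral_sub hM.integrableOn hMf.integrableOn
  have h3 : ∫ x in E, maxS f g n x ∂ν = ∫ x, maxS f g n x ∂ν := by
    apply setIntegral_eq_integral_of_forall_compl_eq_zero
    intro x hx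
    have h0 : ¬ (0 < maxS f g n x) := hx
    exact le_antisymm (not_lt.1 h0) (maxS_nonneg f g n x)
  have h4 : ∫ x in E, maxS f g n (f x) ∂ν ≤ ∫ x, maxS f g n (f x) ∂ν :=
    setIntegral_le_integral hMf (Eventually.of_forall fun x => maxS_nonneg f g n (f x))
  have h5 : ∫ x, maxS f g n (f x) ∂ν = ∫ x, maxS f g n x ∂ν := by
    calc ∫ x, maxS f g n (f x) ∂ν
        = ∫ y, maxS f g n y ∂(Measure.map f ν) :=
          (integral_map hmp.measurable.aemeasurable
            (by rw [hmp.map_eq]; exact hM.aestronglyMeasurable)).symm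
      _ = ∫ x, maxS f g n x ∂ν := by rw [hmp.map_eq]
  linarith [h1, h2, h3, h4, h5]


/-- The core lemma: Birkhoff averages of the indicator of a finite-measure set tend to zero
almost everywhere, for an ergodic invariant infinite sigma-finite measure. -/
lemma birkhoff_indicator_ae_tendsto_zero
    {f : X → X} {ν : Measure X} [SigmaFinite ν]
    (hf : Measurable f) (hmp : MeasurePreserving f ν ν)
    (hinf : ν Set.univ = ⊤)
    (herg : ∀ A : Set X, MeasurableSet A → f ⁻¹' A = A → ν A = 0 ∨ ν Aᶜ = 0)
    {A : Set X} (hA : MeasurableSet A) (hAfin : ν A < ⊤) :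
    ∀ᵐ x ∂ν, Tendsto (fun n : ℕ => birkhoffSum f (A.indicator fun _ => (1:ℝ)) n x / n)
      atTop (nhds 0) := by
  set g : X → ℝ := A.indicator fun _ => (1:ℝ) with hgdef
  have hg0 : ∀ y, 0 ≤ g y := fun y => Set.indicator_nonneg (fun _ _ => zero_le_one) y
  have hg1 : ∀ y, g y ≤ 1 := fun y => by
    by_cases hy : y ∈ A <;> simp [hgdef, Set.indicator_of_mem, Set.indicator_of_notMem, hy]
  have hgm : Measurable g := measurable_const.indicator hA
  have hgint : Integrable g ν := by
    rw [hgdef, integrable_indicator_iff hA]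
    exact integrableOn_const hAfin.ne
  have hs0 : ∀ n x, 0 ≤ birkhoffSum f g n x := fun n x =>
    Finset.sum_nonneg fun i _ => hg0 _
  have hsle : ∀ n x, birkhoffSum f g n x ≤ n := fun n x => by
    calc birkhoffSum f g n x ≤ ∑ _i ∈ Finset.range n, (1:ℝ) :=
          Finset.sum_le_sum fun i _ => hg1 _
      _ = n := by simp
  -- the limsup function
  set L : X → ℝ≥0∞ := fun x =>
    limsup (fun n => ENNReal.ofReal (birkhoffSum f g n x / n)) atTop with hLdef
  have hLm : Measurable L := by
    apply Measurable.limsup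
    intro n
    exact ENNReal.measurable_ofReal.comp ((measurable_birkhoffSum hf hgm n).div_const _)
  -- invariance of L
  have hLinv : ∀ x, L (f x) = L x := by
    intro x
    have hreal : ∀ n : ℕ, 1 ≤ n →
        |birkhoffSum f g n (f x) / n - birkhoffSum f g (n+1) x / ((n:ℕ)+1 : ℕ)| ≤ 1 / n := by
      intro n hn
      have hnn : (0:ℝ) < n := by exact_mod_cast hn
      have hab : birkhoffSum f g n (f x) = birkhoffSum f g (n+1) x - g x := by
        rw [birkhoffSum_succ' f g n x]; ring
      set a := birkhoffSum f g (n+1) x with hadef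
      set b := g x with hbdef
      have ha0 : 0 ≤ a := hs0 _ _
      have ha1 : a ≤ (n:ℝ) + 1 := by
        have := hsle (n+1) x; rw [← hadef] at this; push_cast at this; linarith
      have hb0 : 0 ≤ b := hg0 _
      have hb1 : b ≤ 1 := hg1 _
      rw [hab]
      push_cast
      have h1 : (a - b)/(n:ℝ) - a/((n:ℝ)+1) = (a - b*((n:ℝ)+1))/((n:ℝ)*((n:ℝ)+1)) := by
        field_simp
        ring
      rw [h1, abs_div, abs_of_pos (show (0:ℝ) < (n:ℝ)*((n:ℝ)+1) by positivity),
        div_le_div_iff₀ (by positivity) hnn]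
      have habs : |a - b*((n:ℝ)+1)| ≤ (n:ℝ)+1 := by
        rw [abs_le]; constructor <;> nlinarith
      nlinarith
    have hkey : ∀ (u w : ℕ → ℝ), (∀ n, 0 ≤ w n) → (∀ n : ℕ, 1 ≤ n → |u n - w n| ≤ 1 / n) →
        ∀ δ : ℝ, 0 < δ → ∀ᶠ n in atTop,
          ENNReal.ofReal (u n) ≤ ENNReal.ofReal (w n) + ENNReal.ofReal δ := by
      intro u w hw habs δ hδ
      have hev : ∀ᶠ n : ℕ in atTop, 1/(n:ℝ) < δ :=
        (tendsto_one_div_atTop_nhds_zero_nat).eventually_lt_const hδ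
      filter_upwards [hev, eventually_ge_atTop 1] with n h1n hn1
      have : u n ≤ w n + δ := by
        have := habs n hn1
        rw [abs_le] at this
        linarith [this.1, this.2]
      calc ENNReal.ofReal (u n) ≤ ENNReal.ofReal (w n + δ) := ENNReal.ofReal_le_ofReal this
        _ ≤ ENNReal.ofReal (w n) + ENNReal.ofReal δ := ENNReal.ofReal_add_le
    have hw : limsup (fun n : ℕ =>
        ENNReal.ofReal (birkhoffSum f g (n+1) x / ((n:ℕ)+1 : ℕ))) atTop = L x := by
      rw [hLdef]
      exact limsup_nat_add (fun n => ENNReal.ofReal (birkhoffSum f g n x / n)) 1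
    apply le_antisymm
    · rw [← hw]
      show limsup (fun n => ENNReal.ofReal (birkhoffSum f g n (f x) / n)) atTop ≤ _
      apply mylimsup_le_of_forall_pos
      intro delta hdelta
      apply hkey _ _ (fun n => div_nonneg (hs0 _ _) (by positivity)) _ delta hdelta
      intro n hn
      exact hreal n hn
    · rw [← hw]
      show _ ≤ limsup (fun n => ENNReal.ofReal (birkhoffSum f g n (f x) / n)) atTop
      apply mylimsup_le_of_forall_pos
      intro delta hdelta
      apply hkey _ _ (fun n => div_nonneg (hs0 _ _) (by positivity)) _ delta hdelta
      intro n hn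
      rw [abs_sub_comm]
      exact hreal n hn
  -- per-epsilon null sets
  have hper : ∀ ε : ℝ, 0 < ε → ν {x | ENNReal.ofReal ε < L x} = 0 := by
    intro ε hε
    set D := {x | ENNReal.ofReal ε < L x} with hDdef
    have hD : MeasurableSet D := measurableSet_lt measurable_const hLm
    have hDinv : f ⁻¹' D = D := by
      ext x
      simp only [hDdef, Set.mem_preimage, Set.mem_setOf_eq, hLinv x]
    rcases herg D hD hDinv with hD0 | hD0
    · exact hD0
    · exfalso
      -- choose a big finite-measure set B
      set c : ℝ≥0∞ := ENNReal.ofReal ((ν A).toReal / ε) with hcdef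
      obtain ⟨nB, hnB⟩ : ∃ nB, c < ν (spanningSets ν nB) := by
        have hsup : ⨆ n, ν (spanningSets ν n) = ⊤ := by
          rw [← (monotone_spanningSets ν).measure_iUnion,
            iUnion_spanningSets, hinf]
        rw [← lt_iSup_iff, hsup]
        exact ENNReal.ofReal_lt_top
      set B := spanningSets ν nB with hBdef
      have hB : MeasurableSet B := measurableSet_spanningSets ν nB
      have hBfin : ν B < ⊤ := measure_spanningSets_lt_top ν nB
      set gB : X → ℝ := B.indicator fun _ => (1:ℝ) with hgBdef
      have hgBm : Measurable gB := measurable_const.indicator hB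
      have hgBint : Integrable gB ν := by
        rw [hgBdef, integrable_indicator_iff hB]
        exact integrableOn_const hBfin.ne
      set h : X → ℝ := fun x => g x - ε * gB x with hhdef
      have hhm : Measurable h := hgm.sub (hgBm.const_mul ε)
      have hhint : Integrable h ν := hgint.sub (hgBint.const_mul ε)
      set E : ℕ → Set X := fun n => {x | 0 < maxS f h n x} with hEdef
      have hEmeas : ∀ n, MeasurableSet (E n) := fun n =>
        measurableSet_lt measurable_const (measurable_maxS hf hhm n)
      have hEmono : Monotone E := monotone_nat_of_le_succ fun n x hx =>
        lt_of_lt_of_le hx (maxS_mono f h n x)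
      -- D is covered by the union of the E n
      have hDE : D ⊆ ⋃ n, E n := by
        intro x hx
        have hx' : ENNReal.ofReal ε < L x := hx
        obtain ⟨n, hn⟩ : ∃ n, ENNReal.ofReal ε < ENNReal.ofReal (birkhoffSum f g n x / n) := by
          by_contra hno
          push_neg at hno
          have : L x ≤ ENNReal.ofReal ε :=
            limsup_le_of_le ⟨0, fun a _ => zero_le⟩ (Eventually.of_forall hno)
          exact absurd hx' (not_lt.2 this)
        have hq : 0 ≤ birkhoffSum f g n x / n := div_nonneg (hs0 _ _) (Nat.cast_nonneg n)
        have hlt : ε < birkhoffSum f g n x / n := by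
          rwa [ENNReal.ofReal_lt_ofReal_iff_of_nonneg hε.le] at hn
        have hn0 : 0 < n := by
          rcases Nat.eq_zero_or_pos n with h0' | h0'
          · exfalso
            rw [h0'] at hlt
            simp [birkhoffSum_zero] at hlt
            linarith
          · exact h0'
        have hnn : (0:ℝ) < n := by exact_mod_cast hn0
        have hεn : ε * n < birkhoffSum f g n x := by
          rw [lt_div_iff₀ hnn] at hlt
          exact hlt
        have hSB : birkhoffSum f gB n x ≤ n := by
          calc birkhoffSum f gB n x ≤ ∑ _i ∈ Finset.range n, (1:ℝ) :=
                Finset.sum_le_sum fun i _ => by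
                  by_cases hy : f^[i] x ∈ B <;>
                    simp [hgBdef, Set.indicator_of_mem, Set.indicator_of_notMem, hy]
            _ = n := by simp
        have hsplit : birkhoffSum f h n x
            = birkhoffSum f g n x - ε * birkhoffSum f gB n x := by
          simp only [birkhoffSum, hhdef]
          rw [Finset.sum_sub_distrib, Finset.mul_sum]
        have hpos : 0 < birkhoffSum f h n x := by
          rw [hsplit]
          nlinarith [hεn, hSB, hε.le]
        exact Set.mem_iUnion.2 ⟨n, lt_of_lt_of_le hpos (birkhoffSum_le_maxS f h n x)⟩
      -- maximal ergodic estimate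
      have hbound : ∀ n, ν (B ∩ E n) ≤ c := by
        intro n
        have h0 := maximal_ergodic hf hmp hhm hhint n
        have hint1 : ∫ x in E n, g x ∂ν = (ν (A ∩ E n)).toReal := by
          rw [hgdef]
          rw [integral_indicator_const (1:ℝ) hA, measureReal_restrict_apply hA]
          simp [Measure.real]
        have hint2 : ∫ x in E n, gB x ∂ν = (ν (B ∩ E n)).toReal := by
          rw [hgBdef]
          rw [integral_indicator_const (1:ℝ) hB, measureReal_restrict_apply hB]
          simp [Measure.real]
        have hsub : ∫ x in E n, h x ∂ν
            = ∫ x in E n, g x ∂ν - ε * ∫ x in E n, gB x ∂ν := by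
          rw [hhdef]
          rw [integral_sub hgint.integrableOn ((hgBint.const_mul ε).integrableOn),
            integral_const_mul]
        rw [hsub, hint1, hint2] at h0
        have hmono1 : (ν (A ∩ E n)).toReal ≤ (ν A).toReal :=
          ENNReal.toReal_mono hAfin.ne (measure_mono Set.inter_subset_left)
        have hfinBE : ν (B ∩ E n) ≠ ⊤ :=
          (lt_of_le_of_lt (measure_mono Set.inter_subset_left) hBfin).ne
        rw [hcdef, ENNReal.le_ofReal_iff_toReal_le hfinBE (by positivity)]
        rw [le_div_iff₀ hε]
        linarith
      -- pass to the limit and contradict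
      have hlim : ν (B ∩ ⋃ n, E n) ≤ c := by
        have hmono : Monotone fun n => B ∩ E n := fun n m hnm =>
          Set.inter_subset_inter_right B (hEmono hnm)
        rw [Set.inter_iUnion, hmono.measure_iUnion]
        exact iSup_le hbound
      have hcompl : ν (B \ ⋃ n, E n) = 0 := by
        apply measure_mono_null _ hD0
        intro x hx hxD
        exact hx.2 (hDE hxD)
      have : ν B ≤ c :=
        calc ν B ≤ ν (B ∩ ⋃ n, E n) + ν (B \ ⋃ n, E n) := measure_le_inter_add_diff _ _ _
          _ ≤ c + 0 := add_le_add hlim hcompl.le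
          _ = c := by rw [add_zero]
      exact absurd (lt_of_le_of_lt this hnB) (lt_irrefl _)
  -- L = 0 a.e.
  have haeL : ∀ᵐ x ∂ν, L x = 0 := by
    have hcover : {x | L x ≠ 0} ⊆ ⋃ k : ℕ, {x | ENNReal.ofReal (1/((k:ℝ)+1)) < L x} := by
      intro x hx
      obtain ⟨n, hn⟩ := ENNReal.exists_inv_nat_lt hx
      have hn0 : n ≠ 0 := by
        intro h0'
        rw [h0'] at hn
        simp at hn
      obtain ⟨k, rfl⟩ := Nat.exists_eq_succ_of_ne_zero hn0
      refine Set.mem_iUnion.2 ⟨k, ?_⟩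
      have : ENNReal.ofReal (1/((k:ℝ)+1)) = ((k+1 : ℕ) : ℝ≥0∞)⁻¹ := by
        rw [one_div, show ((k:ℝ)+1) = ((k+1:ℕ):ℝ) by push_cast; ring,
          ENNReal.ofReal_inv_of_pos (by positivity), ENNReal.ofReal_natCast]
      rw [Set.mem_setOf_eq, this]
      exact_mod_cast hn
    have hnull : ν {x | L x ≠ 0} = 0 := by
      apply measure_mono_null hcover
      apply measure_iUnion_null
      intro k
      exact hper (1/((k:ℝ)+1)) (by positivity)
    filter_upwards [measure_eq_zero_iff_ae_notMem.1 hnull] with x hx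
    simpa using hx
  -- conclude
  filter_upwards [haeL] with x hx
  rw [tendsto_order]
  constructor
  · intro a ha
    exact Eventually.of_forall fun n =>
      lt_of_lt_of_le ha (div_nonneg (hs0 _ _) (Nat.cast_nonneg n))
  · intro a ha
    have hlt : limsup (fun n => ENNReal.ofReal (birkhoffSum f g n x / n)) atTop
        < ENNReal.ofReal a := by
      rw [show limsup (fun n => ENNReal.ofReal (birkhoffSum f g n x / n)) atTop = L x from rfl,
        hx]
      exact ENNReal.ofReal_pos.2 ha
    filter_upwards [eventually_lt_of_limsup_lt hlt] with n hn
    have := (ENNReal.ofReal_lt_ofReal_iff_of_nonneg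
      (div_nonneg (hs0 _ _) (Nat.cast_nonneg n))).1 hn
    exact this

end HopfAuxiliary

/-- For a measurable map `f` on a metric space with an f-invariant, ergodic,
conservative, σ-finite infinite measure `ν ≪ m`, such that some point `p` has cofinite mass
outside each of its neighborhoods, the set of points whose Birkhoff averages of every bounded
continuous function converge to its value at `p` has positive `m`-measure. -/
theorem stmt0 {X : Type*} [MetricSpace X] [MeasurableSpace X] [BorelSpace X]
    (m : Measure X) [IsProbabilityMeasure m]
    (f : X → X) (hf : Measurable f)
    (ν : Measure X) [SigmaFinite ν]
    (hinf : ν Set.univ = ⊤)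
    (hinv : ∀ A : Set X, MeasurableSet A → ν (f ⁻¹' A) = ν A)
    (herg : ∀ A : Set X, MeasurableSet A → f ⁻¹' A = A → ν A = 0 ∨ ν Aᶜ = 0)
    (hcons : Conservative f ν)
    (hac : ν ≪ m)
    (p : X)
    (hp : ∀ O : Set X, IsOpen O → p ∈ O → ν Oᶜ < ⊤) :
    0 < m {x : X | ∀ φ : BoundedContinuousFunction X ℝ,
      Tendsto (fun n : ℕ => (∑ i ∈ Finset.range n, φ (f^[i] x)) / (n : ℝ))
        atTop (nhds (φ p))} := by
  have hmp : MeasurePreserving f ν ν :=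
    ⟨hf, Measure.ext fun s hs => by rw [Measure.map_apply hf hs, hinv s hs]⟩
  set A : ℕ → Set X := fun k => (Metric.ball p (1/((k:ℝ)+1)))ᶜ with hAdef
  have hAmeas : ∀ k, MeasurableSet (A k) := fun k => Metric.isOpen_ball.measurableSet.compl
  have hAfin : ∀ k, ν (A k) < ⊤ := fun k =>
    hp _ Metric.isOpen_ball (Metric.mem_ball_self (by positivity))
  have hae : ∀ᵐ x ∂ν, ∀ k : ℕ,
      Tendsto (fun n : ℕ => birkhoffSum f ((A k).indicator fun _ => (1:ℝ)) n x / n)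
        atTop (nhds 0) := by
    rw [ae_all_iff]
    intro k
    exact birkhoff_indicator_ae_tendsto_zero hf hmp hinf herg (hAmeas k) (hAfin k)
  set G := {x : X | ∀ k : ℕ,
      Tendsto (fun n : ℕ => birkhoffSum f ((A k).indicator fun _ => (1:ℝ)) n x / n)
        atTop (nhds 0)} with hGdef
  set N := {x : X | ∀ φ : BoundedContinuousFunction X ℝ,
      Tendsto (fun n : ℕ => (∑ i ∈ Finset.range n, φ (f^[i] x)) / (n : ℝ))
        atTop (nhds (φ p))} with hNdef
  have hGN : G ⊆ N := by
    intro x hx φ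
    rw [Metric.tendsto_atTop]
    intro ε hε
    have hc : ContinuousAt φ p := φ.continuous.continuousAt
    rcases Metric.continuousAt_iff.1 hc (ε/4) (by positivity) with ⟨δ, hδ, hδ'⟩
    obtain ⟨k, hk⟩ : ∃ k : ℕ, 1/((k:ℝ)+1) < δ := exists_nat_one_div_lt hδ
    have hterm : ∀ y : X,
        |φ y - φ p| ≤ ε/4 + 2*‖φ‖ * (A k).indicator (fun _ => (1:ℝ)) y := by
      intro y
      by_cases hy : y ∈ A k
      · rw [Set.indicator_of_mem hy]
        have h1 : |φ y - φ p| ≤ 2*‖φ‖ := by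
          calc |φ y - φ p| ≤ ‖φ y‖ + ‖φ p‖ := by
                rw [← Real.dist_eq]; exact dist_le_norm_add_norm _ _
            _ ≤ ‖φ‖ + ‖φ‖ := add_le_add (φ.norm_coe_le_norm y) (φ.norm_coe_le_norm p)
            _ = 2*‖φ‖ := by ring
        nlinarith [h1, hε.le]
      · rw [Set.indicator_of_notMem hy]
        have hy' : y ∈ Metric.ball p (1/((k:ℝ)+1)) := not_not.1 hy
        have hlt : dist y p < δ := lt_trans (Metric.mem_ball.1 hy') hk
        have := hδ' hlt
        rw [Real.dist_eq] at this
        have hnorm : (0:ℝ) ≤ ‖φ‖ := norm_nonneg _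
        nlinarith [this]
    have htend := hx k
    rw [Metric.tendsto_atTop] at htend
    obtain ⟨N1, hN1⟩ := htend (ε/(4*(2*‖φ‖+1))) (by positivity)
    refine ⟨max N1 1, fun n hn => ?_⟩
    have hn1 : 1 ≤ n := le_trans (le_max_right _ _) hn
    have hnN : N1 ≤ n := le_trans (le_max_left _ _) hn
    have hnn : (0:ℝ) < n := by exact_mod_cast hn1
    set S : ℝ := birkhoffSum f ((A k).indicator fun _ => (1:ℝ)) n x with hSdef
    have hS0 : 0 ≤ S := Finset.sum_nonneg fun i _ =>
      Set.indicator_nonneg (fun _ _ => zero_le_one) _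
    have hSn : S / n < ε/(4*(2*‖φ‖+1)) := by
      have := hN1 n hnN
      rw [Real.dist_eq, sub_zero, abs_of_nonneg (div_nonneg hS0 hnn.le)] at this
      exact this
    have hterm_sum : |∑ i ∈ Finset.range n, (φ (f^[i] x) - φ p)|
        ≤ n*(ε/4) + 2*‖φ‖ * S := by
      calc |∑ i ∈ Finset.range n, (φ (f^[i] x) - φ p)|
          ≤ ∑ i ∈ Finset.range n, |φ (f^[i] x) - φ p| := Finset.abs_sum_le_sum_abs _ _
        _ ≤ ∑ i ∈ Finset.range n,
              (ε/4 + 2*‖φ‖ * (A k).indicator (fun _ => (1:ℝ)) (f^[i] x)) :=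
            Finset.sum_le_sum fun i _ => hterm (f^[i] x)
        _ = n*(ε/4) + 2*‖φ‖ * S := by
            rw [Finset.sum_add_distrib, Finset.sum_const, Finset.card_range, ← Finset.mul_sum]
            rw [hSdef]
            simp [birkhoffSum, nsmul_eq_mul]
    have heq : (∑ i ∈ Finset.range n, φ (f^[i] x))/(n:ℝ) - φ p
        = (∑ i ∈ Finset.range n, (φ (f^[i] x) - φ p))/n := by
      rw [Finset.sum_sub_distrib, Finset.sum_const, Finset.card_range, nsmul_eq_mul]
      field_simp
    rw [Real.dist_eq, heq, abs_div, abs_of_pos hnn]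
    have hfrac : |∑ i ∈ Finset.range n, (φ (f^[i] x) - φ p)| / n ≤ ε/4 + 2*‖φ‖ * (S/n) := by
      rw [div_le_iff₀ hnn]
      calc |∑ i ∈ Finset.range n, (φ (f^[i] x) - φ p)| ≤ n*(ε/4) + 2*‖φ‖ * S := hterm_sum
        _ = (ε/4 + 2*‖φ‖ * (S/n)) * n := by field_simp
    have hnorm : (0:ℝ) ≤ ‖φ‖ := norm_nonneg _
    have hlast : 2*‖φ‖ * (S/n) ≤ ε/4 := by
      have hSn' : S/n ≤ ε/(4*(2*‖φ‖+1)) := hSn.le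
      have h2 : 2*‖φ‖ * (S/n) ≤ 2*‖φ‖ * (ε/(4*(2*‖φ‖+1))) := by
        apply mul_le_mul_of_nonneg_left hSn' (by positivity)
      calc 2*‖φ‖ * (S/n) ≤ 2*‖φ‖ * (ε/(4*(2*‖φ‖+1))) := h2
        _ ≤ ε/4 := by
          have h1 : 2*‖φ‖ * (ε/(4*(2*‖φ‖+1))) = (2*‖φ‖)*ε / (4*(2*‖φ‖+1)) := by ring
          rw [h1, div_le_div_iff₀ (by positivity) (by norm_num : (0:ℝ) < 4)]
          nlinarith
    linarith [hfrac, hlast]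
  -- positivity of m N
  rw [pos_iff_ne_zero]
  intro hm0
  have hνN : ν N = 0 := hac hm0
  have hνG : ν G = 0 := measure_mono_null hGN hνN
  have hνGc : ν Gᶜ = 0 := by
    have := ae_iff.1 hae
    simpa [hGdef, Set.compl_setOf] using this
  have : ν Set.univ ≤ ν G + ν Gᶜ := by
    rw [← Set.union_compl_self G]
    exact measure_union_le _ _
  rw [hinf, hνG, hνGc] at this
  simp at this
end

section
/- Fix α > 0 and let y_0 = 1, y_{n+1} = g(y_n) where g is the inverse of the left branch x ↦ x + 2^α x^{1+α} of the LSV map. Then there exist constants C > 0 and ε > 0 such that |y_n − (α 2^α n)^{−1/α}| ≤ C n^{−(1+ε)/α} for all n ≥ 1. -/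
open Real

lemma my_exp_neg_le_inv {y : ℝ} (hy : 0 ≤ y) : Real.exp (-y) ≤ (1+y)⁻¹ := by
  rw [Real.exp_neg]
  exact inv_anti₀ (by linarith) (by linarith [Real.add_one_le_exp y])

lemma my_log_ge {t : ℝ} (ht : 0 ≤ t) : t/(1+t) ≤ Real.log (1+t) := by
  have h1 : (0:ℝ) < 1 + t := by linarith
  have := Real.log_le_sub_one_of_pos (inv_pos.mpr h1)
  rw [Real.log_inv] at this
  have : -( (1+t)⁻¹ - 1) ≤ Real.log (1+t) := by linarith
  calc t/(1+t) = -((1+t)⁻¹ - 1) := by field_simp; ring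
    _ ≤ _ := this

lemma my_aux_A {α t : ℝ} (hα : 0 < α) (ht : 0 ≤ t) :
    (1+t) ^ (-α) ≤ 1 - α*t/(1+(1+α)*t) := by
  have h1 : (0:ℝ) < 1 + t := by linarith
  rw [Real.rpow_def_of_pos h1, mul_comm]
  have h2 : -α * Real.log (1+t) ≤ -(α * (t/(1+t))) := by
    have := my_log_ge ht
    nlinarith
  have h3 : 0 ≤ α * (t/(1+t)) := by positivity
  calc Real.exp (-α * Real.log (1+t)) ≤ Real.exp (-(α*(t/(1+t)))) := Real.exp_le_exp.mpr h2
    _ ≤ (1 + α*(t/(1+t)))⁻¹ := my_exp_neg_le_inv h3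
    _ = 1 - α*t/(1+(1+α)*t) := by
        have h4 : (0:ℝ) < 1 + (1+α)*t := by nlinarith
        field_simp
        ring

lemma my_aux_B {α t : ℝ} (hα : 0 < α) (ht : 0 ≤ t) :
    1 - α*t ≤ (1+t) ^ (-α) := by
  have h1 : (0:ℝ) < 1 + t := by linarith
  rw [Real.rpow_def_of_pos h1, mul_comm]
  have hlog : Real.log (1+t) ≤ t := by
    have := Real.log_le_sub_one_of_pos h1; linarith
  have h2 := Real.add_one_le_exp (Real.log (1+t) * -α)
  nlinarith [Real.log_nonneg (by linarith : (1:ℝ) ≤ 1+t)]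

lemma my_aux_C {β z : ℝ} (hβ : 0 < β) (hz : 0 ≤ z) :
    (1+z) ^ β ≤ 1 + β * Real.exp (β*z) * z := by
  have h1 : (0:ℝ) < 1 + z := by linarith
  rw [Real.rpow_def_of_pos h1, mul_comm]
  have hlog : Real.log (1+z) ≤ z := by
    have := Real.log_le_sub_one_of_pos h1; linarith
  have h2 : β * Real.log (1+z) ≤ β * z := by nlinarith
  have h3 : Real.exp (β * Real.log (1+z)) ≤ Real.exp (β*z) := Real.exp_le_exp.mpr h2
  have h4 : Real.exp (β*z) ≤ 1 + (β*z) * Real.exp (β*z) := by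
    have := Real.add_one_le_exp (-(β*z))
    rw [Real.exp_neg] at this
    have he : 0 < Real.exp (β*z) := Real.exp_pos _
    have : (-(β*z)+1) * Real.exp (β*z) ≤ 1 := by
      calc (-(β*z)+1) * Real.exp (β*z) ≤ (Real.exp (β*z))⁻¹ * Real.exp (β*z) := by
            apply mul_le_mul_of_nonneg_right this he.le
        _ = 1 := inv_mul_cancel₀ he.ne'
    nlinarith
  calc Real.exp (β * Real.log (1+z)) ≤ Real.exp (β*z) := h3
    _ ≤ 1 + β * Real.exp (β*z) * z := by nlinarith

lemma my_lip {β x : ℝ} (hβ : 0 < β) (hx1 : 1/2 ≤ x) (hx2 : x ≤ 3/2) :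
    |x ^ (-β) - 1| ≤ (2*β*Real.exp β) * |x - 1| := by
  have hxpos : (0:ℝ) < x := by linarith
  have heβ : (1:ℝ) ≤ Real.exp β := by
    have := Real.add_one_le_exp β; linarith
  rcases le_or_gt 1 x with h1 | h1
  · -- x ≥ 1
    set t := x - 1 with htdef
    have ht0 : 0 ≤ t := by simp [htdef]; linarith
    have hxle : x ^ (-β) ≤ 1 := Real.rpow_le_one_of_one_le_of_nonpos h1 (by linarith)
    have hxge : 1 - β*t ≤ x ^ (-β) := by
      have := my_aux_B hβ ht0
      have hx : x = 1 + t := by ring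
      rw [hx]; exact this
    rw [abs_of_nonpos (by linarith), abs_of_nonneg ht0]
    nlinarith
  · -- x < 1
    set s := 1 - x with hsdef
    have hs0 : 0 < s := by simp [hsdef]; linarith
    have hs2 : 2*s ≤ 1 := by simp [hsdef]; linarith
    have hxge1 : 1 ≤ x ^ (-β) :=
      Real.one_le_rpow_of_pos_of_le_one_of_nonpos hxpos (by linarith) (by linarith)
    have hinv : x⁻¹ ≤ 1 + 2*s := by
      rw [inv_le_iff_one_le_mul₀ hxpos]
      nlinarith
    have h2 : x ^ (-β) = (x⁻¹) ^ β := by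
      rw [Real.rpow_neg hxpos.le, ← Real.inv_rpow hxpos.le]
    have h3 : (x⁻¹) ^ β ≤ (1 + 2*s) ^ β :=
      Real.rpow_le_rpow (by positivity) hinv hβ.le
    have h4 : (1 + 2*s) ^ β ≤ 1 + β * Real.exp (β*(2*s)) * (2*s) := my_aux_C hβ (by linarith)
    have h5 : Real.exp (β*(2*s)) ≤ Real.exp β := by
      apply Real.exp_le_exp.mpr; nlinarith
    have h6 : x ^ (-β) ≤ 1 + 2*β*Real.exp β * s := by
      rw [h2]
      calc (x⁻¹) ^ β ≤ (1+2*s)^β := h3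
        _ ≤ 1 + β * Real.exp (β*(2*s)) * (2*s) := h4
        _ ≤ 1 + 2*β*Real.exp β * s := by
            nlinarith [mul_nonneg (mul_nonneg hβ.le hs0.le) (sub_nonneg.mpr h5)]
    rw [abs_of_nonneg (by linarith), abs_of_nonpos (by linarith)]
    have : -(x-1) = s := by rw [hsdef]; ring
    rw [this]
    linarith

open Set Filter

set_option maxHeartbeats 1600000 in
/-- Refined asymptotics of the backward orbit of `1` under the inverse left
branch of the LSV map: `|y_n − (α 2^α n)^{−1/α}| ≤ C n^{−(1+ε)/α}` for all `n ≥ 1`. -/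
theorem stmt11 (α : ℝ) (hα : 0 < α) (g : ℝ → ℝ)
    (hg : ∀ x ∈ Icc (0 : ℝ) 1,
      g x ∈ Icc (0 : ℝ) (1 / 2) ∧ g x + 2 ^ α * (g x) ^ (1 + α) = x)
    (y : ℕ → ℝ) (hy0 : y 0 = 1) (hy : ∀ n, y (n + 1) = g (y n)) :
    ∃ C > (0 : ℝ), ∃ ε > (0 : ℝ), ∀ n : ℕ, 1 ≤ n →
      |y n - (α * 2 ^ α * n) ^ (-(1 / α))| ≤ C * (n : ℝ) ^ (-(1 + ε) / α) := by
  have hα' : α ≠ 0 := hα.ne'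
  set c : ℝ := 2 ^ α with hcdef
  have hc : 0 < c := Real.rpow_pos_of_pos two_pos α
  clear_value c
  set a : ℝ := α * c with hadef
  have ha : 0 < a := mul_pos hα hc
  clear_value a
  -- Step 1: positivity and the basic recurrence
  have key : ∀ n, 0 < y n ∧ y n ≤ 1 := by
    intro n
    induction n with
    | zero => rw [hy0]; exact ⟨one_pos, le_rfl⟩
    | succ n ih =>
      obtain ⟨hm, he⟩ := hg (y n) ⟨ih.1.le, ih.2⟩
      rw [hy n]
      refine ⟨?_, le_trans hm.2 (by norm_num)⟩
      rcases lt_or_eq_of_le hm.1 with h | h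
      · exact h
      · exfalso
        rw [← h, Real.zero_rpow (by linarith : (1:ℝ)+α ≠ 0)] at he
        have : y n = 0 := by simpa using he.symm
        exact absurd this (ne_of_gt ih.1)
  have heq : ∀ n, y (n+1) + c * (y (n+1)) ^ (1+α) = y n := by
    intro n
    rw [hy n]
    exact (hg (y n) ⟨(key n).1.le, (key n).2⟩).2
  -- Step 2: u n = y n ^ (-α)
  set u : ℕ → ℝ := fun n => (y n) ^ (-α) with hudef
  have hun : ∀ n, u n = (y n) ^ (-α) := fun n => rfl
  clear_value u
  have hu1 : ∀ n, 1 ≤ u n := fun n => by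
    rw [hun n]
    exact Real.one_le_rpow_of_pos_of_le_one_of_nonpos (key n).1 (key n).2 (by linarith)
  have hupos : ∀ n, (0:ℝ) < u n := fun n => lt_of_lt_of_le one_pos (hu1 n)
  have hu0 : u 0 = 1 := by rw [hun 0, hy0, Real.one_rpow]
  -- Step 3: the recurrence for u
  have krec : ∀ n, u n = u (n+1) * (1 + c / u (n+1)) ^ (-α) := by
    intro n
    have hz := (key (n+1)).1
    have hposα : (0:ℝ) < (y (n+1)) ^ α := Real.rpow_pos_of_pos hz α
    have hcz : c / u (n+1) = c * (y (n+1)) ^ α := by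
      rw [hun (n+1), Real.rpow_neg hz.le]
      field_simp
    have hyn : y n = y (n+1) * (1 + c * (y (n+1)) ^ α) := by
      have h := heq n
      have hsplit : (y (n+1)) ^ (1+α) = y (n+1) * (y (n+1)) ^ α := by
        rw [Real.rpow_add hz, Real.rpow_one]
      rw [hsplit] at h
      rw [← h]; ring
    have hpos2 : (0:ℝ) < 1 + c * (y (n+1)) ^ α := by positivity
    calc u n = (y n) ^ (-α) := hun n
      _ = (y (n+1) * (1 + c * (y (n+1)) ^ α)) ^ (-α) := by rw [← hyn]
      _ = (y (n+1)) ^ (-α) * (1 + c * (y (n+1)) ^ α) ^ (-α) :=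
          Real.mul_rpow hz.le hpos2.le
      _ = u (n+1) * (1 + c / u (n+1)) ^ (-α) := by rw [hcz, hun (n+1)]
  -- Step 4: one-step bounds
  set K : ℝ := a * (1+α) * c with hKdef
  have hK : 0 < K := by positivity
  clear_value K
  have hδden : (0:ℝ) < 1 + (1+α)*c := by nlinarith
  set δ : ℝ := a / (1 + (1+α)*c) with hδdef
  have hδ : 0 < δ := div_pos ha hδden
  clear_value δ
  have hstep : ∀ n, u (n+1) ≤ u n + a ∧ u n + δ ≤ u (n+1) ∧
      u n + a - K / u n ≤ u (n+1) := by
    intro n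
    set v := u (n+1) with hvdef
    have hv1 : 1 ≤ v := hu1 (n+1)
    have hv0 : (0:ℝ) < v := by linarith
    have hrec : u n = v * (1 + c / v) ^ (-α) := krec n
    clear_value v
    set t := c / v with htdef
    have ht0 : 0 ≤ t := le_of_lt (div_pos hc hv0)
    have hvt : v * t = c := by rw [htdef]; field_simp
    clear_value t
    have htc : t ≤ c := by nlinarith
    have hDpos : (0:ℝ) < 1 + (1+α)*t := by nlinarith
    -- upper: v ≤ u n + a
    have hup1 : v ≤ u n + a := by
      have hB := my_aux_B hα ht0
      have : v * (1 - α*t) ≤ v * ((1+t) ^ (-α)) :=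
        mul_le_mul_of_nonneg_left hB hv0.le
      have hvat : v * (1 - α*t) = v - a := by
        rw [hadef]; nlinarith [hvt]
      rw [← hrec] at this
      linarith [this, hvat.symm.le, hvat.le]
    -- aux_A consequence:  u n ≤ v - a/(1+(1+α)t)  (with numerator a = α c)
    have hA := my_aux_A hα ht0
    have hmain : u n ≤ v - a / (1 + (1+α)*t) := by
      have h1 : u n ≤ v * (1 - α*t/(1+(1+α)*t)) := by
        rw [hrec]; exact mul_le_mul_of_nonneg_left hA hv0.le
      have h2 : v * (1 - α*t/(1+(1+α)*t)) = v - a / (1 + (1+α)*t) := by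
        rw [hadef]
        field_simp
        nlinarith [hvt]
      linarith [h1, h2.le]
    -- crude lower bound
    have hlow1 : u n + δ ≤ v := by
      have h3 : δ ≤ a / (1 + (1+α)*t) := by
        rw [hδdef]
        apply div_le_div_of_nonneg_left ha.le hDpos
        nlinarith
      linarith [hmain]
    -- fine lower bound
    have hlow2 : u n + a - K / u n ≤ v := by
      have h4 : a - a*(1+α)*t ≤ a / (1 + (1+α)*t) := by
        rw [le_div_iff₀ hDpos]
        nlinarith [sq_nonneg ((1+α)*t)]
      have h5 : a*(1+α)*t = K / v := by
        rw [hKdef, ← hvt, eq_div_iff hv0.ne']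
        ring
      have h7 : (1+t) ^ (-α) ≤ 1 :=
        Real.rpow_le_one_of_one_le_of_nonpos (by linarith) (by linarith)
      have hunv : u n ≤ v := by nlinarith [hrec]
      have h6 : K / v ≤ K / u n :=
        div_le_div_of_nonneg_left hK.le (hupos n) hunv
      have := hmain
      rw [h5] at h4
      linarith
    exact ⟨hup1, hlow1, hlow2⟩
  -- Step 5: global bounds by induction
  have hup : ∀ n : ℕ, u n ≤ 1 + a * n := by
    intro n
    induction n with
    | zero => simp [hu0]
    | succ n ih =>
      have := (hstep n).1
      push_cast
      push_cast at ih
      linarith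
  have hlin : ∀ n : ℕ, 1 + δ * n ≤ u n := by
    intro n
    induction n with
    | zero => simp [hu0]
    | succ n ih =>
      have := (hstep n).2.1
      push_cast
      push_cast at ih
      linarith
  -- Step 6: bound on K / u n
  set m : ℝ := min 1 δ with hmdef
  have hm : 0 < m := lt_min one_pos hδ
  have hm1 : m ≤ 1 := min_le_left _ _
  have hmδ : m ≤ δ := min_le_right _ _
  clear_value m
  have hsqrtpos : ∀ n : ℕ, (0:ℝ) < Real.sqrt ((n:ℝ)+1) :=
    fun n => Real.sqrt_pos.mpr (by positivity)
  have hKle : ∀ n : ℕ, K / u n ≤ (K/m) / Real.sqrt ((n:ℝ)+1) := by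
    intro n
    have h1 : m * Real.sqrt ((n:ℝ)+1) ≤ u n := by
      have h2 : Real.sqrt ((n:ℝ)+1) ≤ (n:ℝ)+1 := by
        have e1 : Real.sqrt ((n:ℝ)+1) * Real.sqrt ((n:ℝ)+1) = (n:ℝ)+1 :=
          Real.mul_self_sqrt (by positivity)
        have e2 : (1:ℝ) ≤ Real.sqrt ((n:ℝ)+1) := by
          rw [show (1:ℝ) = Real.sqrt 1 from Real.sqrt_one.symm]
          exact Real.sqrt_le_sqrt (by simp [Nat.cast_nonneg])
        nlinarith
      have h3 : m * ((n:ℝ)+1) ≤ 1 + δ * n := by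
        have hn0 : (0:ℝ) ≤ n := Nat.cast_nonneg n
        nlinarith
      nlinarith [hlin n, hm.le, hsqrtpos n]
    calc K / u n ≤ K / (m * Real.sqrt ((n:ℝ)+1)) :=
          div_le_div_of_nonneg_left hK.le (by positivity) h1
      _ = (K/m) / Real.sqrt ((n:ℝ)+1) := by
          rw [div_div]
  set M : ℝ := max (2*(K/m)) 1 with hMdef
  have hM1 : (1:ℝ) ≤ M := le_max_right _ _
  have hM2 : 2*(K/m) ≤ M := le_max_left _ _
  have hM0 : 0 < M := lt_of_lt_of_le one_pos hM1
  clear_value M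
  have hlow : ∀ n : ℕ, 1 + a * n - M * Real.sqrt n ≤ u n := by
    intro n
    induction n with
    | zero => simp [hu0]
    | succ n ih =>
      have hs1 : (0:ℝ) < Real.sqrt ((n:ℝ)+1) := hsqrtpos n
      have hs0 : (0:ℝ) ≤ Real.sqrt n := Real.sqrt_nonneg _
      have hsle : Real.sqrt (n:ℝ) ≤ Real.sqrt ((n:ℝ)+1) :=
        Real.sqrt_le_sqrt (by linarith)
      have e1 : Real.sqrt ((n:ℝ)+1) * Real.sqrt ((n:ℝ)+1) = (n:ℝ)+1 :=
        Real.mul_self_sqrt (by positivity)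
      have e2 : Real.sqrt (n:ℝ) * Real.sqrt (n:ℝ) = (n:ℝ) :=
        Real.mul_self_sqrt (Nat.cast_nonneg n)
      have hdiff : (Real.sqrt ((n:ℝ)+1) - Real.sqrt n) *
          (Real.sqrt ((n:ℝ)+1) + Real.sqrt n) = 1 := by
        nlinarith [e1, e2]
      -- M''/√(n+1) ≤ M (√(n+1) - √n)
      have h4 : (K/m) / Real.sqrt ((n:ℝ)+1) ≤
          M * (Real.sqrt ((n:ℝ)+1) - Real.sqrt n) := by
        rw [div_le_iff₀ hs1]
        have hSs : (0:ℝ) ≤ Real.sqrt ((n:ℝ)+1) - Real.sqrt n := by linarith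
        have h7 : (1:ℝ)/2 ≤ (Real.sqrt ((n:ℝ)+1) - Real.sqrt n) * Real.sqrt ((n:ℝ)+1) := by
          nlinarith [hdiff, sq_nonneg (Real.sqrt ((n:ℝ)+1) - Real.sqrt n)]
        nlinarith [h7, hM0, hM2]
      have h5 := (hstep n).2.2
      have h6 := hKle n
      have ih' := ih
      push_cast
      push_cast at ih' h4 ⊢
      nlinarith [h4, h5, h6, ih']
  have habs : ∀ n : ℕ, 1 ≤ n → |u n - a * n| ≤ M * Real.sqrt n := by
    intro n hn
    have hn1 : (1:ℝ) ≤ (n:ℝ) := by exact_mod_cast hn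
    have hs1 : (1:ℝ) ≤ Real.sqrt n := by
      rw [show (1:ℝ) = Real.sqrt 1 from Real.sqrt_one.symm]
      exact Real.sqrt_le_sqrt hn1
    rw [abs_le]
    constructor
    · have := hlow n
      nlinarith
    · have := hup n
      nlinarith
  -- Step 7: conclusion
  set β : ℝ := 1/α with hβdef
  have hβ : 0 < β := by rw [hβdef]; positivity
  have hyu : ∀ n, (u n) ^ (-β) = y n := by
    intro n
    have h1 : (-α)*(-β) = 1 := by rw [hβdef]; field_simp
    calc (u n) ^ (-β) = ((y n) ^ (-α)) ^ (-β) := by rw [hun n]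
      _ = (y n) ^ ((-α)*(-β)) := (Real.rpow_mul (key n).1.le _ _).symm
      _ = (y n) ^ (1:ℝ) := by rw [h1]
      _ = y n := Real.rpow_one _
  set L : ℝ := 2*β*Real.exp β with hLdef
  have hL : 0 < L := by positivity
  have haρ : 0 < a ^ (-β-1) := Real.rpow_pos_of_pos ha _
  have haρ2 : 0 < a ^ (-β) := Real.rpow_pos_of_pos ha _
  set C₀ : ℝ := L * M * a ^ (-β-1) with hC0def
  have hC0 : 0 < C₀ := by positivity
  clear_value C₀
  set N : ℝ := 2*M/a with hNdef
  have hN : 0 < N := by positivity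
  clear_value N
  set P : ℝ := (N*N) ^ (β+1/2) with hPdef
  have hP : 0 < P := Real.rpow_pos_of_pos (by positivity) _
  clear_value P
  set B : ℝ := 1 + a ^ (-β) with hBdef
  have hB : 0 < B := by positivity
  clear_value B
  clear_value L β
  refine ⟨C₀ + B*P, add_pos hC0 (mul_pos hB hP), α/2, half_pos hα, ?_⟩
  intro n hn
  have hn1 : (1:ℝ) ≤ (n:ℝ) := by exact_mod_cast hn
  have hnpos : (0:ℝ) < (n:ℝ) := by linarith
  have hw : (0:ℝ) < a * (n:ℝ) := by positivity
  have hexp : -(1+α/2)/α = -β - 1/2 := by rw [hβdef]; field_simp; ring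
  rw [hexp]
  have hrpos : (0:ℝ) < (n:ℝ)^(-β-1/2) := Real.rpow_pos_of_pos hnpos _
  by_cases hcase : M * Real.sqrt n ≤ (a*(n:ℝ))/2
  · -- main case
    obtain ⟨hlb, hrb⟩ := abs_le.mp (habs n hn)
    have hupos' := hupos n
    have hx1 : 1/2 ≤ u n / (a*(n:ℝ)) := by rw [le_div_iff₀ hw]; linarith
    have hx2 : u n / (a*(n:ℝ)) ≤ 3/2 := by rw [div_le_iff₀ hw]; linarith
    have hlip := my_lip hβ hx1 hx2
    rw [← hLdef] at hlip
    have hxsub : u n / (a*(n:ℝ)) - 1 = (u n - a*(n:ℝ))/(a*(n:ℝ)) := by field_simp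
    have habs2 : |u n / (a*(n:ℝ)) - 1| ≤ (M * Real.sqrt n)/(a*(n:ℝ)) := by
      rw [hxsub, abs_div, abs_of_pos hw]
      apply div_le_div_of_nonneg_right ?_ hw.le
      exact abs_le.mpr ⟨hlb, hrb⟩
    have hmul : (u n) ^ (-β) = (a*(n:ℝ))^(-β) * (u n/(a*(n:ℝ)))^(-β) := by
      rw [← Real.mul_rpow hw.le (by positivity)]
      congr 1
      field_simp
    have hw_nonneg : (0:ℝ) ≤ (a*(n:ℝ))^(-β) := (Real.rpow_pos_of_pos hw _).le
    have h1 : |y n - (a*(n:ℝ))^(-β)| ≤ (a*(n:ℝ))^(-β) * (L * ((M*Real.sqrt n)/(a*(n:ℝ)))) := by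
      rw [← hyu n, hmul]
      have hfac : (a*(n:ℝ))^(-β) * (u n/(a*(n:ℝ)))^(-β) - (a*(n:ℝ))^(-β)
           = (a*(n:ℝ))^(-β) * ((u n/(a*(n:ℝ)))^(-β) - 1) := by ring
      rw [hfac, abs_mul, abs_of_nonneg hw_nonneg]
      apply mul_le_mul_of_nonneg_left ?_ hw_nonneg
      calc |(u n/(a*(n:ℝ)))^(-β) - 1| ≤ L * |u n/(a*(n:ℝ)) - 1| := hlip
        _ ≤ L * ((M*Real.sqrt n)/(a*(n:ℝ))) := mul_le_mul_of_nonneg_left habs2 hL.le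
    have e1 : ((a*(n:ℝ)):ℝ)^(-β-1) = a^(-β-1) * ((n:ℝ))^(-β-1) :=
      Real.mul_rpow ha.le hnpos.le
    have e2 : ((a*(n:ℝ)):ℝ)^(-β-1) = (a*(n:ℝ))^(-β) * (a*(n:ℝ))⁻¹ := by
      rw [show -β-1 = -β + (-1) by ring, Real.rpow_add hw, Real.rpow_neg_one]
    have e3 : Real.sqrt n = ((n:ℝ))^((1:ℝ)/2) := Real.sqrt_eq_rpow _
    have h2 : (a*(n:ℝ))^(-β) * (L * ((M*Real.sqrt n)/(a*(n:ℝ))))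
        = C₀ * ((n:ℝ))^(-β-1/2) := by
      rw [hC0def]
      calc (a*(n:ℝ))^(-β) * (L * ((M*Real.sqrt n)/(a*(n:ℝ))))
          = L*M*Real.sqrt n * ((a*(n:ℝ))^(-β) * (a*(n:ℝ))⁻¹) := by ring
        _ = L*M*Real.sqrt n * ((a*(n:ℝ))^(-β-1)) := by rw [← e2]
        _ = L*M*Real.sqrt n * (a^(-β-1) * ((n:ℝ))^(-β-1)) := by rw [e1]
        _ = L*M*a^(-β-1) * (((n:ℝ))^((1:ℝ)/2) * ((n:ℝ))^(-β-1)) := by rw [e3]; ring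
        _ = L*M*a^(-β-1) * ((n:ℝ))^(-β-1/2) := by
            rw [← Real.rpow_add hnpos]
            congr 1
            ring
    rw [h2] at h1
    have hBP0 : (0:ℝ) ≤ B*P := (mul_pos hB hP).le
    have hfin : C₀ * ((n:ℝ))^(-β-1/2) ≤ (C₀ + B*P) * ((n:ℝ))^(-β-1/2) :=
      mul_le_mul_of_nonneg_right (by linarith) hrpos.le
    linarith
  · -- trivial case: n is small
    push_neg at hcase
    have hwβ : (a*(n:ℝ))^(-β) ≤ a^(-β) := by
      apply Real.rpow_le_rpow_of_nonpos ha ?_ (by linarith)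
      nlinarith
    have hwβ0 : (0:ℝ) < (a*(n:ℝ))^(-β) := Real.rpow_pos_of_pos hw _
    have hyb : |y n - (a*(n:ℝ))^(-β)| ≤ B := by
      rw [hBdef, abs_le]
      constructor
      · have := (key n).1; linarith [hwβ]
      · have := (key n).2; linarith [hwβ0, haρ2]
    have hs1 : (1:ℝ) ≤ Real.sqrt n := by
      rw [show (1:ℝ) = Real.sqrt 1 from Real.sqrt_one.symm]
      exact Real.sqrt_le_sqrt hn1
    have e2 : Real.sqrt n * Real.sqrt n = (n:ℝ) := Real.mul_self_sqrt hnpos.le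
    have hsn : (0:ℝ) < Real.sqrt n := lt_of_lt_of_le one_pos hs1
    have hsq : Real.sqrt n * a ≤ 2*M := by
      by_contra hcon
      push_neg at hcon
      have h9 : a * ((n:ℝ)) < 2*M*Real.sqrt n := by linarith [hcase]
      have h11 : 2*M*Real.sqrt n < (Real.sqrt n*a)*Real.sqrt n :=
        mul_lt_mul_of_pos_right hcon hsn
      have h12 : (Real.sqrt n*a)*Real.sqrt n = a*(n:ℝ) := by
        rw [show (Real.sqrt n*a)*Real.sqrt n = a*(Real.sqrt n*Real.sqrt n) by ring, e2]
      linarith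
    have hnN : (n:ℝ) ≤ N*N := by
      rw [hNdef]
      have h10 : Real.sqrt n ≤ 2*M/a := by
        rw [le_div_iff₀ ha]; linarith
      have h13 := mul_self_le_mul_self (Real.sqrt_nonneg ((n:ℝ))) h10
      rw [e2] at h13
      exact h13
    have hnP : ((n:ℝ))^(β+1/2) ≤ P := by
      rw [hPdef]
      exact Real.rpow_le_rpow hnpos.le hnN (by positivity)
    have hcancel : ((n:ℝ))^(β+1/2) * ((n:ℝ))^(-β-1/2) = 1 := by
      rw [← Real.rpow_add hnpos, show (β+1/2)+(-β-1/2) = 0 by ring, Real.rpow_zero]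
    have hBP : B ≤ (B*P) * ((n:ℝ))^(-β-1/2) := by
      calc B = B * (((n:ℝ))^(β+1/2) * ((n:ℝ))^(-β-1/2)) := by rw [hcancel, mul_one]
        _ ≤ B * (P * ((n:ℝ))^(-β-1/2)) := by
            apply mul_le_mul_of_nonneg_left ?_ hB.le
            exact mul_le_mul_of_nonneg_right hnP hrpos.le
        _ = (B*P) * ((n:ℝ))^(-β-1/2) := by ring
    calc |y n - (a*(n:ℝ))^(-β)| ≤ B := hyb
      _ ≤ (B*P) * ((n:ℝ))^(-β-1/2) := hBP
      _ ≤ (C₀ + B*P) * ((n:ℝ))^(-β-1/2) :=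
          mul_le_mul_of_nonneg_right (by linarith) hrpos.le

-- #print axioms stmt11
end

section
/- Let c: J → (0,∞) be continuous at α* ∈ J, v: J → (0,∞) with v(α) > 1 for α < α*, v → 1 as α → α*-, and suppose for each α < α* a nonnegative sequence (a_{α,k})_{k≥1} satisfies |a_{α,k} − c_α k^{−v(α)}| ≤ D k^{−v(α)−ε} for all k, with D, ε > 0 fixed. Then lim_{α→α*-} (v(α)−1) ∑_{k=1}^∞ a_{α,k} = c_{α*}. -/
open Filter
set_option maxHeartbeats 1000000

/-- The Riemann zeta function on real arguments `s > 1`, as the series `∑ n^{-s}`. -/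
noncomputable def realZeta (s : ℝ) : ℝ := ∑' n : ℕ+, (n : ℝ) ^ (-s)

lemma summable_pnat_rpow {s : ℝ} (hs : 1 < s) :
    Summable (fun k : ℕ+ => (k : ℝ) ^ (-s)) := by
  have h : Summable (fun n : ℕ => (n : ℝ) ^ (-s)) :=
    Real.summable_nat_rpow.mpr (by linarith)
  have := h.comp_injective PNat.coe_injective
  simpa [Function.comp_def] using this

lemma realZeta_eq_nat {s : ℝ} (hs : 1 < s) :
    realZeta s = ∑' n : ℕ, 1 / (n : ℝ) ^ s := by
  have hsum : Summable (fun n : ℕ => 1 / (n : ℝ) ^ s) := by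
    have := Real.summable_nat_rpow.mpr (show -s < -1 by linarith)
    refine this.congr fun n => ?_
    rw [Real.rpow_neg (Nat.cast_nonneg n), one_div]
  rw [Summable.tsum_eq_zero_add hsum]
  have h0 : (1 : ℝ) / (0 : ℕ) ^ s = 0 := by
    rw [Nat.cast_zero, Real.zero_rpow (by linarith : s ≠ 0), div_zero]
  rw [h0, zero_add, realZeta,
    ← Equiv.pnatEquivNat.symm.tsum_eq (fun k : ℕ+ => (k : ℝ) ^ (-s))]
  refine tsum_congr fun n => ?_
  have hcoe : ((Equiv.pnatEquivNat.symm n : ℕ+) : ℝ) = (n : ℝ) + 1 := by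
    simp [Equiv.pnatEquivNat, Nat.succPNat]
  rw [hcoe, Real.rpow_neg (by positivity), one_div]
  norm_num

lemma realZeta_mono {s t : ℝ} (hs : 1 < s) (hst : s ≤ t) :
    realZeta t ≤ realZeta s := by
  refine Summable.tsum_le_tsum (fun k => ?_) (summable_pnat_rpow (lt_of_lt_of_le hs hst))
    (summable_pnat_rpow hs)
  exact Real.rpow_le_rpow_of_exponent_le (by exact_mod_cast k.one_le) (by linarith)

/-- Abstract series version of the zeta asymptotics: if for each `α < α*`
the nonnegative sequence `a_{α,·}` satisfies `|a_{α,k} − c_α k^{−v(α)}| ≤ D k^{−v(α)−ε}`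
with `c` continuous at `α*`, `v(α) > 1` for `α < α*` and `v → 1` as `α → α*⁻`, then
`(v(α) − 1) ∑_k a_{α,k} → c_{α*}` as `α → α*⁻`. -/
theorem stmt14 (J : Set ℝ) (hJ : J.OrdConnected) (αstar : ℝ) (hmem : αstar ∈ J)
    (c : ℝ → ℝ) (hcpos : ∀ α ∈ J, 0 < c α)
    (hc : Tendsto c (nhdsWithin αstar (J ∩ Set.Iio αstar)) (nhds (c αstar)))
    (v : ℝ → ℝ) (hvpos : ∀ α ∈ J, 0 < v α)
    (hv1 : ∀ α ∈ J, α < αstar → 1 < v α)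
    (hvlim : Tendsto v (nhdsWithin αstar (J ∩ Set.Iio αstar)) (nhds 1))
    (D ε : ℝ) (hD : 0 < D) (hε : 0 < ε)
    (a : ℝ → ℕ+ → ℝ)
    (hapos : ∀ α ∈ J, α < αstar → ∀ k : ℕ+, 0 ≤ a α k)
    (ha : ∀ α ∈ J, α < αstar → ∀ k : ℕ+,
      |a α k - c α * (k : ℝ) ^ (-(v α))| ≤ D * (k : ℝ) ^ (-(v α) - ε)) :
    Tendsto (fun α => (v α - 1) * ∑' k, a α k)
      (nhdsWithin αstar (J ∩ Set.Iio αstar)) (nhds (c αstar)) := by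
  set L := nhdsWithin αstar (J ∩ Set.Iio αstar) with hL
  have hmemL : ∀ᶠ α in L, α ∈ J ∩ Set.Iio αstar := eventually_mem_nhdsWithin
  -- Summability facts, valid for every α ∈ J ∩ Iio αstar
  have key : ∀ α ∈ J ∩ Set.Iio αstar,
      Summable (fun k : ℕ+ => a α k - c α * (k : ℝ) ^ (-(v α))) ∧
      Summable (a α) ∧
      |∑' k : ℕ+, (a α k - c α * (k : ℝ) ^ (-(v α)))| ≤ D * realZeta (1 + ε) := by
    intro α hα
    obtain ⟨hαJ, hαlt⟩ := hα
    have hv : 1 < v α := hv1 α hαJ hαlt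
    have hvε : 1 < v α + ε := by linarith
    have hsumε : Summable (fun k : ℕ+ => D * (k : ℝ) ^ (-(v α) - ε)) := by
      have := (summable_pnat_rpow hvε).mul_left D
      refine this.congr fun k => ?_
      rw [show -(v α + ε) = -(v α) - ε by ring]
    have herr : Summable (fun k : ℕ+ => a α k - c α * (k : ℝ) ^ (-(v α))) := by
      refine Summable.of_norm_bounded hsumε fun k => ?_
      simpa using ha α hαJ hαlt k
    have hmain : Summable (fun k : ℕ+ => c α * (k : ℝ) ^ (-(v α))) :=
      (summable_pnat_rpow hv).mul_left (c α)
    have hsa : Summable (a α) := by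
      have := herr.add hmain
      refine this.congr fun k => ?_
      ring
    refine ⟨herr, hsa, ?_⟩
    calc |∑' k : ℕ+, (a α k - c α * (k : ℝ) ^ (-(v α)))|
        ≤ ∑' k : ℕ+, |a α k - c α * (k : ℝ) ^ (-(v α))| := by
          have h := norm_tsum_le_tsum_norm
            (f := fun k : ℕ+ => a α k - c α * (k : ℝ) ^ (-(v α)))
            (by simpa [Real.norm_eq_abs] using herr.abs)
          simpa [Real.norm_eq_abs] using h
      _ ≤ ∑' k : ℕ+, D * (k : ℝ) ^ (-(v α) - ε) :=
          Summable.tsum_le_tsum (fun k => ha α hαJ hαlt k) herr.abs hsumε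
      _ = D * ∑' k : ℕ+, (k : ℝ) ^ (-(v α + ε)) := by
          rw [← tsum_mul_left]
          exact tsum_congr fun k => by rw [show -(v α + ε) = -(v α) - ε by ring]
      _ ≤ D * realZeta (1 + ε) := by
          have h := realZeta_mono (show (1:ℝ) < 1 + ε by linarith)
            (show 1 + ε ≤ v α + ε by linarith)
          have heq : (∑' k : ℕ+, (k : ℝ) ^ (-(v α + ε))) = realZeta (v α + ε) := rfl
          rw [heq]
          exact mul_le_mul_of_nonneg_left h hD.le
  -- decomposition of the sum
  have hdecomp : ∀ᶠ α in L, (v α - 1) * ∑' k, a α k =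
      c α * ((v α - 1) * realZeta (v α))
        + (v α - 1) * ∑' k : ℕ+, (a α k - c α * (k : ℝ) ^ (-(v α))) := by
    filter_upwards [hmemL] with α hα
    obtain ⟨herr, hsa, _⟩ := key α hα
    have hv : 1 < v α := hv1 α hα.1 hα.2
    have hmain : Summable (fun k : ℕ+ => c α * (k : ℝ) ^ (-(v α))) :=
      (summable_pnat_rpow hv).mul_left (c α)
    have hsplit : ∑' k, a α k =
        (∑' k : ℕ+, (a α k - c α * (k : ℝ) ^ (-(v α))))
          + c α * realZeta (v α) := by
      rw [realZeta, ← tsum_mul_left, ← Summable.tsum_add herr hmain]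
      exact tsum_congr fun k => by ring
    rw [hsplit]; ring
  rw [tendsto_congr' hdecomp]
  -- limit of the main term
  have hvgt : Tendsto v L (nhdsWithin 1 (Set.Ioi 1)) := by
    rw [tendsto_nhdsWithin_iff]
    exact ⟨hvlim, hmemL.mono fun α hα => hv1 α hα.1 hα.2⟩
  have hmain_lim : Tendsto (fun α => (v α - 1) * realZeta (v α)) L (nhds 1) := by
    have := tendsto_sub_mul_tsum_nat_rpow.comp hvgt
    refine this.congr' ?_
    filter_upwards [hmemL] with α hα
    simp only [Function.comp_apply]
    rw [realZeta_eq_nat (hv1 α hα.1 hα.2)]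
  -- limit of the error term: squeeze to 0
  have herr_lim : Tendsto
      (fun α => (v α - 1) * ∑' k : ℕ+, (a α k - c α * (k : ℝ) ^ (-(v α))))
      L (nhds 0) := by
    have hb : Tendsto (fun α => (v α - 1) * (D * realZeta (1 + ε))) L (nhds 0) := by
      have : Tendsto (fun α => v α - 1) L (nhds 0) := by
        have := hvlim.sub (tendsto_const_nhds (x := (1:ℝ)))
        simpa using this
      simpa using this.mul_const (D * realZeta (1 + ε))
    refine squeeze_zero_norm' ?_ hb
    filter_upwards [hmemL] with α hα
    obtain ⟨herr, hsa, hbound⟩ := key α hα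
    have hv : 1 < v α := hv1 α hα.1 hα.2
    have h1 : (0:ℝ) ≤ v α - 1 := by linarith
    rw [Real.norm_eq_abs, abs_mul, abs_of_nonneg h1]
    exact mul_le_mul_of_nonneg_left hbound h1
  have := (hc.mul hmain_lim).add herr_lim
  simpa using this
end
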